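/- Let A be a finite group, B ≤ A, and S a set of subgroups between B and A containing A and B and closed under products and intersections (products assumed to be subgroups in S). Then any two maximal decreasing chains in S from A to B have the same multiset of indices between consecutive terms. -/

import Mathlib

open scoped Pointwise


section Aux
variable {A : Type*} [Group A] [Finite A]

lemma myCard_subgroupOf {H K : Subgroup A} (h : H ≤ K) :
    Nat.card (H.subgroupOf K) = Nat.card H :=
  Nat.card_congr (Subgroup.subgroupOfEquivOfLe h).toEquiv

lemma myRelindex_mul_card {H K : Subgroup A} (h : H ≤ K) :
    H.relIndex K * Nat.card H = Nat.card K := by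
  have h2 := Subgroup.card_mul_index (H.subgroupOf K)
  rw [myCard_subgroupOf h] at h2
  rw [Subgroup.relIndex, mul_comm]
  exact h2

lemma myCard_mul_inf (V W : Subgroup A) :
    Nat.card (↑V * ↑W : Set A) * Nat.card (V ⊓ W : Subgroup A) = Nat.card V * Nat.card W := by
  rw [Subgroup.card_mul_eq_card_subgroup_mul_card_quotient W (↑V)]
  have hb : Function.Bijective
      (fun q : V ⧸ W.subgroupOf V => Quotient.liftOn' q
        (fun v => (⟨QuotientGroup.mk (v : A), ⟨(v : A), v.2, rfl⟩⟩ :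
          ((↑V : Set A).image (QuotientGroup.mk : A → A ⧸ W))))
        (by
          intro v₁ v₂ hr
          rw [QuotientGroup.leftRel_apply] at hr
          have : ((v₁ : A)⁻¹ * (v₂ : A)) ∈ W := hr
          exact Subtype.ext ((QuotientGroup.eq).2 this))) := by
    constructor
    · intro q₁ q₂
      refine Quotient.inductionOn₂' q₁ q₂ ?_
      intro v₁ v₂ h
      have : ((v₁ : A)⁻¹ * (v₂ : A)) ∈ W := (QuotientGroup.eq).1 (congrArg Subtype.val h)
      exact Quotient.sound' (QuotientGroup.leftRel_apply.2 this)
    · rintro ⟨x, v, hv, rfl⟩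
      exact ⟨QuotientGroup.mk (⟨v, hv⟩ : V), rfl⟩
  have hcard : Nat.card (V ⧸ W.subgroupOf V)
      = Nat.card ((↑V : Set A).image (QuotientGroup.mk : A → A ⧸ W)) :=
    Nat.card_eq_of_bijective _ hb
  have h1 := Subgroup.card_eq_card_quotient_mul_card_subgroup (W.subgroupOf V)
  have h2 : Nat.card (W.subgroupOf V) = Nat.card (V ⊓ W : Subgroup A) := by
    rw [show W.subgroupOf V = (V ⊓ W).subgroupOf V by
      rw [inf_comm, Subgroup.inf_subgroupOf_right]]
    exact myCard_subgroupOf inf_le_left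
  rw [hcard, h2] at h1
  rw [h1]; ring

end Aux

section Chains
variable {A : Type*} [Group A] [Finite A]

lemma myCard_lt {H K : Subgroup A} (h : H < K) : Nat.card H < Nat.card K := by
  have h1 : (H : Set A) ⊂ (K : Set A) := SetLike.coe_ssubset_coe.2 h
  have h2 : Nat.card H = (H : Set A).ncard := (Nat.card_coe_set_eq _).symm
  have h3 : Nat.card K = (K : Set A).ncard := (Nat.card_coe_set_eq _).symm
  rw [h2, h3]
  exact Set.ncard_lt_ncard h1 (Set.toFinite _)

lemma myRel_eq {T V W : Subgroup A} (hVT : V ≤ T)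
    (h : Nat.card T * Nat.card (V ⊓ W : Subgroup A) = Nat.card V * Nat.card W) :
    V.relIndex T = (V ⊓ W).relIndex W := by
  have e1 := myRelindex_mul_card hVT
  have e2 := myRelindex_mul_card (inf_le_right : V ⊓ W ≤ W)
  have pV : 0 < Nat.card V := Nat.card_pos
  have pD : 0 < Nat.card (V ⊓ W : Subgroup A) := Nat.card_pos
  have key : V.relIndex T * (Nat.card V * Nat.card (V ⊓ W : Subgroup A))
      = (V ⊓ W).relIndex W * (Nat.card V * Nat.card (V ⊓ W : Subgroup A)) := by
    calc V.relIndex T * (Nat.card V * Nat.card (V ⊓ W : Subgroup A))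
        = (V.relIndex T * Nat.card V) * Nat.card (V ⊓ W : Subgroup A) := by ring
      _ = Nat.card T * Nat.card (V ⊓ W : Subgroup A) := by rw [e1]
      _ = Nat.card V * Nat.card W := h
      _ = Nat.card V * ((V ⊓ W).relIndex W * Nat.card (V ⊓ W : Subgroup A)) := by rw [e2]
      _ = (V ⊓ W).relIndex W * (Nat.card V * Nat.card (V ⊓ W : Subgroup A)) := by ring
  exact Nat.eq_of_mul_eq_mul_right (by positivity) key

/-- relation for descending maximal chains -/
def ChR (S : Set (Subgroup A)) (x y : Subgroup A) : Prop :=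
  y < x ∧ ∀ X ∈ S, ¬(y < X ∧ X < x)

def Good (S : Set (Subgroup A)) (B T : Subgroup A) (l : List (Subgroup A)) : Prop :=
  l.Chain' (ChR S) ∧ l.head? = some T ∧ l.getLast? = some B ∧ ∀ x ∈ l, x ∈ S

noncomputable def idx (l : List (Subgroup A)) : Multiset ℕ :=
  (((l.zip l.tail).map fun p => p.2.relIndex p.1 : List ℕ) : Multiset ℕ)

lemma idx_cons_cons (a b : Subgroup A) (l : List (Subgroup A)) :
    idx (a :: b :: l) = b.relIndex a ::ₘ idx (b :: l) := rfl

lemma exists_chain (S : Set (Subgroup A)) (B : Subgroup A) (hBS : B ∈ S)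
    (hBle : ∀ U ∈ S, B ≤ U) :
    ∀ N (T : Subgroup A), Nat.card T ≤ N → T ∈ S → ∃ l, Good S B T l := by
  intro N
  induction N with
  | zero =>
    intro T h _
    have := Nat.card_pos (α := T); omega
  | succ N ih =>
    intro T hN hTS
    by_cases hTB : T = B
    · exact ⟨[T], List.isChain_singleton _, rfl, by simp [hTB], by simp [hTS]⟩
    · have hBT : B < T := lt_of_le_of_ne (hBle T hTS) (Ne.symm hTB)
      obtain ⟨M, hM, hMmax⟩ := Set.Finite.exists_maximalFor id {X | X ∈ S ∧ X < T}
        (Set.toFinite _) ⟨B, hBS, hBT⟩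
      have hcM : Nat.card M ≤ N := by have := myCard_lt hM.2; omega
      obtain ⟨l, hc, hh, hlast, hmem⟩ := ih M hcM hM.1
      rcases l with _ | ⟨a, l'⟩
      · simp at hh
      · have ha : a = M := by simpa using hh
        subst ha
        refine ⟨T :: a :: l', ?_, rfl, ?_, ?_⟩
        · refine List.isChain_cons_cons.2 ⟨⟨hM.2, fun X hXS hX => ?_⟩, hc⟩
          have : a = X := le_antisymm hX.1.le (hMmax (show X ∈ {X | X ∈ S ∧ X < T} from ⟨hXS, hX.2⟩) hX.1.le)
          exact absurd this (ne_of_lt hX.1)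
        · rw [List.getLast?_cons_cons]; exact hlast
        · intro x hx
          rcases List.mem_cons.1 hx with rfl | hx
          · exact hTS
          · exact hmem x hx

end Chains

section Main
variable {A : Type*} [Group A] [Finite A]

lemma le_of_set_mul_right {V W K : Subgroup A} (hK : (K : Set A) = (V : Set A) * (W : Set A)) :
    V ≤ K := by
  intro x hx
  have h : x * 1 ∈ (↑V * ↑W : Set A) := Set.mul_mem_mul hx W.one_mem
  rw [mul_one] at h
  rw [← SetLike.mem_coe, hK]; exact h

lemma le_of_set_mul_left {V W K : Subgroup A} (hK : (K : Set A) = (V : Set A) * (W : Set A)) :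
    W ≤ K := by
  intro x hx
  have h : (1 : A) * x ∈ (↑V * ↑W : Set A) := Set.mul_mem_mul V.one_mem hx
  rw [one_mul] at h
  rw [← SetLike.mem_coe, hK]; exact h

lemma myDmax (S : Set (Subgroup A))
    (hprod : ∀ I ∈ S, ∀ J ∈ S, ∃ K ∈ S, (K : Set A) = (I : Set A) * (J : Set A))
    {T V W : Subgroup A} (hVS : V ∈ S) (hWS : W ∈ S) (hVT : V ≤ T) (hWT : W < T)
    (hWmax : ∀ X ∈ S, ¬(W < X ∧ X < T))
    (hcard : Nat.card T * Nat.card (V ⊓ W : Subgroup A) = Nat.card V * Nat.card W) :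
    ∀ X ∈ S, ¬((V ⊓ W) < X ∧ X < V) := by
  rintro X hXS ⟨hDX, hXV⟩
  obtain ⟨K, hKS, hK⟩ := hprod X hXS W hWS
  have hXK : X ≤ K := le_of_set_mul_right hK
  have hWK : W ≤ K := le_of_set_mul_left hK
  have hKT : K ≤ T := by
    intro x hx
    rw [← SetLike.mem_coe, hK] at hx
    rcases hx with ⟨a, ha, b, hb, rfl⟩
    exact T.mul_mem (hVT (hXV.le ha)) (hWT.le hb)
  have hWK' : W < K := by
    refine lt_of_le_of_ne hWK fun hWKeq => ?_
    have hXW : X ≤ W := hWKeq ▸ hXK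
    exact hDX.not_ge (le_inf hXV.le hXW)
  have hKT' : K = T := by
    by_contra hne
    exact hWmax K hKS ⟨hWK', lt_of_le_of_ne hKT hne⟩
  have hXW : X ⊓ W = V ⊓ W :=
    le_antisymm (inf_le_inf_right W hXV.le) (le_inf hDX.le inf_le_right)
  have hcard2 : Nat.card T * Nat.card (V ⊓ W : Subgroup A) = Nat.card X * Nat.card W := by
    have h0 := myCard_mul_inf X W
    rw [hXW] at h0
    have hTset : Nat.card T = Nat.card (↑X * ↑W : Set A) := by
      rw [← hKT']; exact Nat.card_congr (Equiv.setCongr hK)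
    rw [hTset]; exact h0
  have hXVcard : Nat.card X = Nat.card V := by
    have hW : 0 < Nat.card W := Nat.card_pos
    have := hcard2.symm.trans hcard
    exact Nat.eq_of_mul_eq_mul_right hW this
  exact absurd (myCard_lt hXV) (by omega)

end Main

section Key
variable {A : Type*} [Group A] [Finite A]

lemma key_lemma (S : Set (Subgroup A)) (B : Subgroup A) (hBS : B ∈ S)
    (hBle : ∀ U ∈ S, B ≤ U)
    (hprod : ∀ I ∈ S, ∀ J ∈ S, ∃ K ∈ S, (K : Set A) = (I : Set A) * (J : Set A))
    (hinf : ∀ I ∈ S, ∀ J ∈ S, I ⊓ J ∈ S) :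
    ∀ N (T : Subgroup A), Nat.card T ≤ N → T ∈ S →
      ∀ l₁ l₂, Good S B T l₁ → Good S B T l₂ → idx l₁ = idx l₂ := by
  intro N
  induction N with
  | zero =>
    intro T h _ _ _ _ _
    have := Nat.card_pos (α := T); omega
  | succ N ih =>
    intro T hN hTS l₁ l₂ h₁ h₂
    obtain ⟨hc₁, hh₁, hlast₁, hmem₁⟩ := h₁
    obtain ⟨hc₂, hh₂, hlast₂, hmem₂⟩ := h₂
    rcases l₁ with _ | ⟨a₁, r₁⟩
    · simp at hh₁
    rcases l₂ with _ | ⟨a₂, r₂⟩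
    · simp at hh₂
    have ha₁ : a₁ = T := by simpa using hh₁
    have ha₂ : a₂ = T := by simpa using hh₂
    rw [ha₁] at hc₁ hlast₁ hmem₁ ⊢
    rw [ha₂] at hc₂ hlast₂ hmem₂ ⊢
    rcases r₁ with _ | ⟨V, r₁⟩
    · have hTB : T = B := by simpa using hlast₁
      rcases r₂ with _ | ⟨W, r₂⟩
      · rfl
      · exfalso
        have hWT : W < T := (List.isChain_cons_cons.1 hc₂).1.1
        have hWS : W ∈ S := hmem₂ W (by simp)
        have hBW := hBle W hWS
        rw [hTB] at hWT
        exact absurd (lt_of_le_of_lt hBW hWT) (lt_irrefl B)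
    rcases r₂ with _ | ⟨W, r₂⟩
    · exfalso
      have hTB : T = B := by simpa using hlast₂
      have hVT : V < T := (List.isChain_cons_cons.1 hc₁).1.1
      have hVS : V ∈ S := hmem₁ V (by simp)
      have hBV := hBle V hVS
      rw [hTB] at hVT
      exact absurd (lt_of_le_of_lt hBV hVT) (lt_irrefl B)
    obtain ⟨⟨hVT, hVmax⟩, hc₁'⟩ := List.isChain_cons_cons.1 hc₁
    obtain ⟨⟨hWT, hWmax⟩, hc₂'⟩ := List.isChain_cons_cons.1 hc₂
    have hVS : V ∈ S := hmem₁ V (by simp)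
    have hWS : W ∈ S := hmem₂ W (by simp)
    have hgood₁ : Good S B V (V :: r₁) :=
      ⟨hc₁', rfl, by rwa [List.getLast?_cons_cons] at hlast₁,
        fun x hx => hmem₁ x (List.mem_cons_of_mem _ hx)⟩
    have hgood₂ : Good S B W (W :: r₂) :=
      ⟨hc₂', rfl, by rwa [List.getLast?_cons_cons] at hlast₂,
        fun x hx => hmem₂ x (List.mem_cons_of_mem _ hx)⟩
    have hcV : Nat.card V ≤ N := by have := myCard_lt hVT; omega
    have hcW : Nat.card W ≤ N := by have := myCard_lt hWT; omega
    by_cases hVW : V = W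
    · subst hVW
      have heq := ih V hcV hVS _ _ hgood₁ hgood₂
      rw [idx_cons_cons, idx_cons_cons, heq]
    · obtain ⟨K, hKS, hK⟩ := hprod V hVS W hWS
      have hVK : V ≤ K := le_of_set_mul_right hK
      have hWK : W ≤ K := le_of_set_mul_left hK
      have hKT : K ≤ T := by
        intro x hx
        rw [← SetLike.mem_coe, hK] at hx
        rcases hx with ⟨a, ha, b, hb, rfl⟩
        exact T.mul_mem (hVT.le ha) (hWT.le hb)
      have hVK' : V < K := by
        refine lt_of_le_of_ne hVK fun hVKeq => ?_
        have hWV : W ≤ V := hVKeq ▸ hWK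
        rcases lt_or_eq_of_le hWV with h | h
        · exact hWmax V hVS ⟨h, hVT⟩
        · exact hVW h.symm
      have hKeq : K = T := by
        by_contra hne
        exact hVmax K hKS ⟨hVK', lt_of_le_of_ne hKT hne⟩
      have hTcard : Nat.card T * Nat.card (V ⊓ W : Subgroup A)
          = Nat.card V * Nat.card W := by
        have h0 := myCard_mul_inf V W
        have hTset : Nat.card T = Nat.card (↑V * ↑W : Set A) := by
          rw [← hKeq]; exact Nat.card_congr (Equiv.setCongr hK)
        rw [hTset]; exact h0
      have hTcard' : Nat.card T * Nat.card (W ⊓ V : Subgroup A)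
          = Nat.card W * Nat.card V := by
        rw [inf_comm, mul_comm (Nat.card W)]; exact hTcard
      have hDS : V ⊓ W ∈ S := hinf V hVS W hWS
      have hDV : V ⊓ W < V := by
        refine lt_of_le_of_ne inf_le_left fun hEq => ?_
        have hVW' : V ≤ W := by rw [← hEq]; exact inf_le_right
        rcases lt_or_eq_of_le hVW' with h | h
        · exact hVmax W hWS ⟨h, hWT⟩
        · exact hVW h
      have hDW : V ⊓ W < W := by
        refine lt_of_le_of_ne inf_le_right fun hEq => ?_
        have hWV' : W ≤ V := by rw [← hEq]; exact inf_le_left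
        rcases lt_or_eq_of_le hWV' with h | h
        · exact hWmax V hVS ⟨h, hVT⟩
        · exact hVW h.symm
      have hDmaxV : ∀ X ∈ S, ¬((V ⊓ W) < X ∧ X < V) :=
        myDmax S hprod hVS hWS hVT.le hWT hWmax hTcard
      have hDmaxW : ∀ X ∈ S, ¬((V ⊓ W) < X ∧ X < W) := by
        have h0 := myDmax S hprod hWS hVS hWT.le hVT hVmax hTcard'
        rw [inf_comm] at h0
        exact h0
      obtain ⟨c, hcc, hch, hclast, hcmem⟩ :=
        exists_chain S B hBS hBle (Nat.card (V ⊓ W : Subgroup A)) (V ⊓ W) le_rfl hDS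
      rcases c with _ | ⟨d, c'⟩
      · simp at hch
      have hd : d = V ⊓ W := by simpa using hch
      subst hd
      have hgoodV : Good S B V (V :: (V ⊓ W) :: c') :=
        ⟨List.isChain_cons_cons.2 ⟨⟨hDV, hDmaxV⟩, hcc⟩, rfl,
          by rw [List.getLast?_cons_cons]; exact hclast,
          fun x hx => by
            rcases List.mem_cons.1 hx with rfl | hx
            · exact hVS
            · exact hcmem x hx⟩
      have hgoodW : Good S B W (W :: (V ⊓ W) :: c') :=
        ⟨List.isChain_cons_cons.2 ⟨⟨hDW, hDmaxW⟩, hcc⟩, rfl,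
          by rw [List.getLast?_cons_cons]; exact hclast,
          fun x hx => by
            rcases List.mem_cons.1 hx with rfl | hx
            · exact hWS
            · exact hcmem x hx⟩
      have e₁ := ih V hcV hVS _ _ hgood₁ hgoodV
      have e₂ := ih W hcW hWS _ _ hgood₂ hgoodW
      rw [idx_cons_cons, idx_cons_cons, e₁, e₂, idx_cons_cons, idx_cons_cons]
      have r₁eq : V.relIndex T = (V ⊓ W).relIndex W := myRel_eq hVT.le hTcard
      have r₂eq : W.relIndex T = (V ⊓ W).relIndex V := by
        have := myRel_eq hWT.le hTcard'
        rwa [inf_comm] at this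
      rw [r₁eq, r₂eq, Multiset.cons_swap]

end Key

section Conv
variable {A : Type*} [Group A] [Finite A]

lemma ofFn_rev_eq {α : Type*} {n : ℕ} (f : Fin n → α) :
    List.ofFn (fun i => f i.rev) = (List.ofFn f).reverse := by
  apply List.ext_getElem (by simp)
  intro i h1 h2
  rw [List.getElem_reverse]
  rw [List.getElem_ofFn, List.getElem_ofFn]
  congr 1
  apply Fin.ext
  simp only [Fin.val_rev]
  simp at h1 h2 ⊢
  omega

lemma coe_ofFn_rev {α : Type*} {n : ℕ} (f : Fin n → α) :
    ((List.ofFn (fun i => f i.rev) : List α) : Multiset α) = ↑(List.ofFn f) := by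
  rw [ofFn_rev_eq, Multiset.coe_reverse]

lemma idx_ofFn : ∀ {k : ℕ} (g : Fin (k + 1) → Subgroup A),
    idx (List.ofFn g)
      = ↑(List.ofFn fun i : Fin k => (g i.succ).relIndex (g i.castSucc)) := by
  intro k
  induction k with
  | zero => intro g; simp [List.ofFn_succ, idx]
  | succ k ihk =>
    intro g
    have h2 : List.ofFn (fun i : Fin (k + 1) => g i.succ)
        = g (0 : Fin (k + 1)).succ :: List.ofFn (fun i : Fin k => g i.succ.succ) :=
      List.ofFn_succ
    rw [List.ofFn_succ (f := g), h2, idx_cons_cons, ← h2, ihk (fun i => g i.succ)]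
    rw [List.ofFn_succ (f := fun i : Fin (k + 1) => (g i.succ).relIndex (g i.castSucc))]
    rw [← Multiset.cons_coe]
    simp [Fin.succ_castSucc, -Fin.castSucc_succ]

end Conv

/-- Any two maximal chains in a product- and intersection-closed family `S` of
subgroups between `B` and `A` have the same multiset of indices between
consecutive terms. -/
theorem stmt_7 {A : Type*} [Group A] [Finite A] (B : Subgroup A)
    (S : Set (Subgroup A)) (hBS : B ∈ S) (htopS : ⊤ ∈ S)
    (hBle : ∀ U ∈ S, B ≤ U)
    (hprod : ∀ I ∈ S, ∀ J ∈ S, ∃ K ∈ S, (K : Set A) = (I : Set A) * (J : Set A))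
    (hinf : ∀ I ∈ S, ∀ J ∈ S, I ⊓ J ∈ S)
    (n m : ℕ) (V : Fin (n + 1) → Subgroup A) (W : Fin (m + 1) → Subgroup A)
    (hV : StrictMono V) (hW : StrictMono W)
    (hV0 : V 0 = B) (hVn : V (Fin.last n) = ⊤)
    (hW0 : W 0 = B) (hWm : W (Fin.last m) = ⊤)
    (hVS : ∀ i, V i ∈ S) (hWS : ∀ i, W i ∈ S)
    (hVmax : ∀ i : Fin n, ∀ X ∈ S, ¬(V i.castSucc < X ∧ X < V i.succ))
    (hWmax : ∀ i : Fin m, ∀ X ∈ S, ¬(W i.castSucc < X ∧ X < W i.succ)) :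
    (↑(List.ofFn fun i : Fin n => (V i.castSucc).relIndex (V i.succ)) : Multiset ℕ)
      = ↑(List.ofFn fun i : Fin m => (W i.castSucc).relIndex (W i.succ)) := by
  have mkGood : ∀ (k : ℕ) (U : Fin (k + 1) → Subgroup A), StrictMono U → U 0 = B →
      U (Fin.last k) = ⊤ → (∀ i, U i ∈ S) →
      (∀ i : Fin k, ∀ X ∈ S, ¬(U i.castSucc < X ∧ X < U i.succ)) →
      Good S B ⊤ (List.ofFn (fun i : Fin (k + 1) => U i.rev)) := by
    intro k U hU hU0 hUk hUS hUmax
    refine ⟨?_, ?_, ?_, ?_⟩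
    · show List.IsChain _ _; rw [List.isChain_ofFn]
      intro i hi
      have hi' : i < k := by omega
      have e1 : (⟨i, by omega⟩ : Fin (k + 1)) = (⟨i, hi'⟩ : Fin k).castSucc := rfl
      have e2 : (⟨i + 1, hi⟩ : Fin (k + 1)) = (⟨i, hi'⟩ : Fin k).succ := rfl
      rw [e1, e2, Fin.rev_castSucc, Fin.rev_succ]
      exact ⟨hU Fin.castSucc_lt_succ, fun X hX h => hUmax (⟨i, hi'⟩ : Fin k).rev X hX h⟩
    · rw [List.ofFn_succ]
      simp [Fin.rev_zero, hUk]
    · rw [List.getLast?_eq_head?_reverse, ← ofFn_rev_eq (fun i : Fin (k + 1) => U i.rev)]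
      simp [Fin.rev_rev, List.ofFn_succ, hU0]
    · intro x hx
      rw [List.mem_ofFn] at hx
      obtain ⟨i, rfl⟩ := hx
      exact hUS _
  have goodV := mkGood n V hV hV0 hVn hVS hVmax
  have goodW := mkGood m W hW hW0 hWm hWS hWmax
  have h := key_lemma S B hBS hBle hprod hinf (Nat.card (⊤ : Subgroup A)) ⊤ le_rfl htopS
    _ _ goodV goodW
  rw [idx_ofFn, idx_ofFn] at h
  have eV : (fun i : Fin n => (V i.succ.rev).relIndex (V i.castSucc.rev))
      = fun i : Fin n => ((fun j : Fin n => (V j.castSucc).relIndex (V j.succ)) i.rev) := by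
    funext i; rw [Fin.rev_succ, Fin.rev_castSucc]
  have eW : (fun i : Fin m => (W i.succ.rev).relIndex (W i.castSucc.rev))
      = fun i : Fin m => ((fun j : Fin m => (W j.castSucc).relIndex (W j.succ)) i.rev) := by
    funext i; rw [Fin.rev_succ, Fin.rev_castSucc]
  rw [eV, eW, coe_ofFn_rev (fun j : Fin n => (V j.castSucc).relIndex (V j.succ)),
    coe_ofFn_rev (fun j : Fin m => (W j.castSucc).relIndex (W j.succ))] at h
  exact h
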